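/- Fix a real y > 1. Suppose for each even integer k ≥ 12 we are given b_k : ℕ → ℝ satisfying |b_k(n)| ≤ 2 C_k n^{k/2} for all n ≥ 1, where C_k = ((2π)^k/(k−1)!) · e^{28.466} · √((k/12)·log k) · (1.0242382·k/12)^{k/2}, and define F_k(iy) = E_k(iy) + ∑_{n≥1} b_k(n) e^{−2πny}. Then F_k(iy) → 1 as k → ∞ over even k; in particular (1/k) log|F_k(iy)| → 0, so the family F_k is sparse. -/

import Mathlib

open Filter Real

/-- The divisor power sum `σ_l(n) = ∑_{d ∣ n} d^l`, as a real number. -/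
noncomputable def sigmaR (l n : ℕ) : ℝ := ∑ d ∈ n.divisors, (d : ℝ) ^ l

/-- The Eisenstein series `E_k(iy) = 1 − (2k/B_k) ∑_{n≥1} σ_{k−1}(n) e^{−2πny}`. -/
noncomputable def EisW (k : ℕ) (y : ℝ) : ℝ :=
  1 - (2 * (k : ℝ) / ((bernoulli k : ℚ) : ℝ)) *
    ∑' n : ℕ, sigmaR (k - 1) (n + 1) * Real.exp (-2 * Real.pi * ((n : ℝ) + 1) * y)

/-- The constant
`C_k = ((2π)^k/(k−1)!) · e^{28.466} · √((k/12)·log k) · (1.0242382·k/12)^{k/2}`. -/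
noncomputable def Ck (k : ℕ) : ℝ :=
  ((2 * Real.pi) ^ k / (Nat.factorial (k - 1) : ℝ)) * Real.exp 28.466 *
    Real.sqrt (((k : ℝ) / 12) * Real.log k) *
    (1.0242382 * (k : ℝ) / 12) ^ ((k : ℝ) / 2)

/-- The extremal modular form `F_k(iy) = E_k(iy) + ∑_{n≥1} b_k(n) e^{−2πny}`. -/
noncomputable def Fext (b : ℕ → ℕ → ℝ) (k : ℕ) (y : ℝ) : ℝ :=
  EisW k y + ∑' n : ℕ, b k (n + 1) * Real.exp (-2 * Real.pi * ((n : ℝ) + 1) * y)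

lemma pow_le_aux (m : ℕ) {c x : ℝ} (hc : 0 < c) (hx : 0 ≤ x) :
    x ^ m ≤ ((m : ℝ) / (c * Real.exp 1)) ^ m * Real.exp (c * x) := by
  rcases Nat.eq_zero_or_pos m with hm | hm
  · subst hm
    simpa using Real.one_le_exp (by positivity)
  · have hm' : (0:ℝ) < m := by exact_mod_cast hm
    set u := c * x / m with hu_def
    have hu : 0 ≤ u := by positivity
    have h1 : u ≤ Real.exp (u - 1) := by
      have := Real.add_one_le_exp (u - 1); linarith
    have h2 : u ^ m ≤ Real.exp (u - 1) ^ m := pow_le_pow_left₀ hu h1 m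
    have h3 : Real.exp (u - 1) ^ m = Real.exp (c * x) / Real.exp 1 ^ m := by
      rw [← Real.exp_nat_mul, ← Real.exp_nat_mul]
      rw [← Real.exp_sub]
      congr 1
      have : (m : ℝ) * u = c * x := by
        rw [hu_def]; field_simp
      linarith [this]
    have hx' : x = u * m / c := by
      rw [hu_def]; field_simp
    calc x ^ m = (u * (m / c)) ^ m := by rw [hx']; ring_nf
      _ = u ^ m * (m / c) ^ m := mul_pow _ _ _
      _ ≤ (Real.exp (c * x) / Real.exp 1 ^ m) * ((m:ℝ) / c) ^ m := by
          apply mul_le_mul_of_nonneg_right (h2.trans_eq h3) (by positivity)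
      _ = ((m : ℝ) / (c * Real.exp 1)) ^ m * Real.exp (c * x) := by
          rw [div_pow, div_pow, mul_pow]
          ring

lemma master {y : ℝ} (hy : 1 < y) (C : ℝ) (hC : 0 ≤ C) (m : ℕ) (a : ℕ → ℝ)
    (ha : ∀ n : ℕ, |a n| ≤ C * ((n:ℝ)+1)^m * Real.exp (-2*Real.pi*((n:ℝ)+1)*y)) :
    Summable a ∧ |∑' n, a n| ≤ C * ((m:ℝ)/(Real.pi*(y+1)*Real.exp 1))^m *
      (Real.exp (-(Real.pi*(y-1))) * (1 - Real.exp (-(Real.pi*(y-1))))⁻¹) := by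
  have hpi := Real.pi_pos
  set q : ℝ := Real.exp (-(Real.pi*(y-1))) with hq_def
  have hq0 : 0 < q := Real.exp_pos _
  have hq1 : q < 1 := by
    rw [hq_def, Real.exp_lt_one_iff]
    nlinarith
  have hcc : 0 < Real.pi * (y+1) := by nlinarith
  set M : ℝ := C * ((m:ℝ)/(Real.pi*(y+1)*Real.exp 1))^m with hM_def
  have hM0 : 0 ≤ M := by
    apply mul_nonneg hC
    positivity
  have key : ∀ n : ℕ, |a n| ≤ M * q ^ (n+1) := by
    intro n
    refine (ha n).trans ?_
    have hx : (0:ℝ) ≤ (n:ℝ)+1 := by positivity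
    have h1 : ((n:ℝ)+1)^m ≤ ((m:ℝ)/(Real.pi*(y+1)*Real.exp 1))^m
        * Real.exp (Real.pi*(y+1) * ((n:ℝ)+1)) := pow_le_aux m hcc hx
    have h2 : Real.exp (-2*Real.pi*((n:ℝ)+1)*y)
        = Real.exp (-(Real.pi*(y+1) * ((n:ℝ)+1))) * q ^ (n+1) := by
      rw [hq_def, ← Real.exp_nat_mul, ← Real.exp_add]
      congr 1
      push_cast
      ring
    rw [h2, hM_def]
    have h3 : C * ((n:ℝ)+1)^m ≤ C * (((m:ℝ)/(Real.pi*(y+1)*Real.exp 1))^m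
        * Real.exp (Real.pi*(y+1) * ((n:ℝ)+1))) := mul_le_mul_of_nonneg_left h1 hC
    calc C * ((n:ℝ)+1)^m * (Real.exp (-(Real.pi*(y+1) * ((n:ℝ)+1))) * q ^ (n+1))
        ≤ C * (((m:ℝ)/(Real.pi*(y+1)*Real.exp 1))^m
            * Real.exp (Real.pi*(y+1) * ((n:ℝ)+1)))
          * (Real.exp (-(Real.pi*(y+1) * ((n:ℝ)+1))) * q ^ (n+1)) := by
          apply mul_le_mul_of_nonneg_right h3 (by positivity)
      _ = C * ((m:ℝ)/(Real.pi*(y+1)*Real.exp 1))^m * q^(n+1)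
            * (Real.exp (Real.pi*(y+1) * ((n:ℝ)+1)) * Real.exp (-(Real.pi*(y+1) * ((n:ℝ)+1)))) := by
          ring
      _ = C * ((m:ℝ)/(Real.pi*(y+1)*Real.exp 1))^m * q^(n+1) := by
          rw [← Real.exp_add]
          simp
  have hgeom : Summable (fun n : ℕ => M * q ^ (n+1)) := by
    have : Summable (fun n : ℕ => (M * q) * q ^ n) :=
      (summable_geometric_of_lt_one hq0.le hq1).mul_left _
    refine this.congr fun n => by ring
  have habs : Summable (fun n => |a n|) :=
    Summable.of_nonneg_of_le (fun n => abs_nonneg _) key hgeom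
  have hsum : Summable a := habs.of_abs
  refine ⟨hsum, ?_⟩
  have habs' : Summable (fun n => ‖a n‖) := by
    simpa only [Real.norm_eq_abs] using habs
  have h4 : |∑' n, a n| ≤ ∑' n, |a n| := by
    simpa only [Real.norm_eq_abs] using norm_tsum_le_tsum_norm habs'
  refine h4.trans ?_
  have h5 : ∑' n, |a n| ≤ ∑' n, M * q ^ (n+1) := Summable.tsum_le_tsum key habs hgeom
  refine h5.trans ?_
  have h6 : ∑' n : ℕ, M * q ^ (n+1) = M * (q * (1-q)⁻¹) := by
    have : ∀ n : ℕ, M * q ^ (n+1) = (M * q) * q ^ n := fun n => by ring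
    rw [tsum_congr this, tsum_mul_left, tsum_geometric_of_lt_one hq0.le hq1]
    ring
  rw [h6, hM_def]

lemma fact_lb (k : ℕ) : ((k:ℝ)/Real.exp 1)^k ≤ (Nat.factorial k : ℝ) := by
  have hx : (0:ℝ) ≤ (k:ℝ) := Nat.cast_nonneg k
  have h1 : ((k:ℝ))^k / (Nat.factorial k : ℝ) ≤ Real.exp k := by
    refine le_trans ?_ (Real.sum_le_exp_of_nonneg hx (k+1))
    exact Finset.single_le_sum (f := fun i => (k:ℝ)^i / (Nat.factorial i : ℝ))
      (fun i _ => by positivity) (Finset.self_mem_range_succ k)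
  have hek : Real.exp (k:ℝ) = Real.exp 1 ^ k := by
    rw [← Real.exp_nat_mul]; norm_num
  have hfac : (0:ℝ) < (Nat.factorial k : ℝ) := by exact_mod_cast k.factorial_pos
  have hep : (0:ℝ) < Real.exp 1 ^ k := by positivity
  rw [div_pow]
  rw [div_le_iff₀ hep]
  rw [div_le_iff₀ hfac] at h1
  rw [hek] at h1
  linarith [h1]

lemma bern_bound {k : ℕ} (hk : Even k) (h1 : 1 ≤ k) :
    |2 * (k:ℝ) / ((bernoulli k : ℚ) : ℝ)| ≤ (2*Real.pi)^k / (Nat.factorial (k-1) : ℝ) := by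
  obtain ⟨j, hj⟩ := hk
  have hj2 : k = 2 * j := by omega
  have hj0 : j ≠ 0 := by omega
  subst hj2
  have hs := hasSum_zeta_nat (k := j) hj0
  set B : ℝ := ((bernoulli (2 * j) : ℚ) : ℝ) with hB
  have hfac : (0:ℝ) < (Nat.factorial (2*j) : ℝ) := by exact_mod_cast (2*j).factorial_pos
  have hpi := Real.pi_pos
  have hR1 : (1:ℝ) ≤ (-1 : ℝ) ^ (j + 1) * (2 : ℝ) ^ (2 * j - 1) * Real.pi ^ (2 * j) *
      B / (Nat.factorial (2 * j) : ℝ) := by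
    have hterm : 1 / (((1:ℕ):ℝ)) ^ (2*j) ≤ ∑' i : ℕ, 1 / (i:ℝ) ^ (2*j) :=
      Summable.le_tsum hs.summable 1 (fun i _ => by positivity)
    rw [hs.tsum_eq] at hterm
    simpa using hterm
  have habs : (Nat.factorial (2*j) : ℝ) ≤ (2:ℝ)^(2*j-1) * Real.pi^(2*j) * |B| := by
    have h2 : (Nat.factorial (2*j) : ℝ) ≤ (-1 : ℝ) ^ (j + 1) * (2 : ℝ) ^ (2 * j - 1) *
        Real.pi ^ (2 * j) * B := by
      rw [le_div_iff₀ hfac] at hR1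
      linarith
    calc (Nat.factorial (2*j) : ℝ)
        ≤ (-1 : ℝ) ^ (j + 1) * (2 : ℝ) ^ (2 * j - 1) * Real.pi ^ (2 * j) * B := h2
      _ ≤ |(-1 : ℝ) ^ (j + 1) * (2 : ℝ) ^ (2 * j - 1) * Real.pi ^ (2 * j) * B| :=
          le_abs_self _
      _ = (2:ℝ)^(2*j-1) * Real.pi^(2*j) * |B| := by
          rw [abs_mul, abs_mul, abs_mul]
          simp [abs_of_pos hpi, abs_pow]
  have hBpos : 0 < |B| := by
    rcases eq_or_ne B 0 with h | h
    · rw [h] at habs; simp at habs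
      exact absurd habs (Nat.factorial_ne_zero _)
    · exact abs_pos.mpr h
  have hfac1 : (0:ℝ) < (Nat.factorial (2*j-1) : ℝ) := by exact_mod_cast (2*j-1).factorial_pos
  rw [abs_div, abs_of_nonneg (by positivity : (0:ℝ) ≤ 2 * ((2*j : ℕ):ℝ))]
  rw [div_le_div_iff₀ hBpos hfac1]
  have hfaceq : ((2*j : ℕ):ℝ) * (Nat.factorial (2*j-1) : ℝ) = (Nat.factorial (2*j) : ℝ) := by
    rw [← Nat.cast_mul, Nat.mul_factorial_pred (by omega)]
  have hpow : (2:ℝ)^(2*j-1) * 2 = (2:ℝ)^(2*j) := by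
    rw [← pow_succ]
    congr 1
    omega
  have h3 : 2 * (Nat.factorial (2*j) : ℝ) ≤ (2:ℝ)^(2*j) * Real.pi^(2*j) * |B| := by
    have h2 := mul_le_mul_of_nonneg_left habs (by norm_num : (0:ℝ) ≤ 2)
    have heq : 2*((2:ℝ)^(2*j-1) * Real.pi^(2*j) * |B|)
        = (2:ℝ)^(2*j) * Real.pi^(2*j) * |B| := by rw [← hpow]; ring
    linarith
  calc 2 * ((2*j : ℕ):ℝ) * (Nat.factorial (2*j-1) : ℝ)
      = 2 * (Nat.factorial (2*j) : ℝ) := by rw [mul_assoc, hfaceq]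
    _ ≤ (2:ℝ)^(2*j) * Real.pi^(2*j) * |B| := h3
    _ = (2*Real.pi)^(2*j) * |B| := by rw [mul_pow]

lemma sigmaR_nonneg (l n : ℕ) : 0 ≤ sigmaR l n :=
  Finset.sum_nonneg fun d _ => by positivity

lemma sigmaR_le (l n : ℕ) : sigmaR l n ≤ (n:ℝ)^(l+1) := by
  have hsub : n.divisors ⊆ Finset.Icc 1 n := fun d hd =>
    Finset.mem_Icc.mpr ⟨Nat.pos_of_mem_divisors hd, Nat.divisor_le hd⟩
  calc sigmaR l n ≤ ∑ d ∈ n.divisors, (n:ℝ)^l := by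
        refine Finset.sum_le_sum fun d hd => ?_
        exact pow_le_pow_left₀ (Nat.cast_nonneg d) (Nat.cast_le.mpr (Nat.divisor_le hd)) l
    _ = (n.divisors.card : ℝ) * (n:ℝ)^l := by
        rw [Finset.sum_const, nsmul_eq_mul]
    _ ≤ (n:ℝ) * (n:ℝ)^l := by
        refine mul_le_mul_of_nonneg_right ?_ (by positivity)
        have : n.divisors.card ≤ (Finset.Icc 1 n).card := Finset.card_le_card hsub
        simp [Nat.card_Icc] at this
        exact_mod_cast this
    _ = (n:ℝ)^(l+1) := by ring

lemma main_bound {y : ℝ} (hy : 1 < y) (b : ℕ → ℕ → ℝ)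
    (hb : ∀ k : ℕ, Even k → 12 ≤ k → ∀ n : ℕ, 1 ≤ n →
      |b k n| ≤ 2 * Ck k * (n : ℝ) ^ ((k : ℝ) / 2))
    {k : ℕ} (hk : Even k) (hk12 : 12 ≤ k) :
    |Fext b k y - 1| ≤
      (Real.exp (-(Real.pi*(y-1))) * (1 - Real.exp (-(Real.pi*(y-1))))⁻¹) *
        ((k:ℝ) * (2/(y+1))^k +
          2 * Real.exp 28.466 * ((k:ℝ)^2 *
            (Real.sqrt (Real.pi * 1.0242382 * Real.exp 1 / (6*(y+1))))^k)) := by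
  have hpi := Real.pi_pos
  obtain ⟨m, hm⟩ := hk
  have hk2m : k = 2 * m := by omega
  have hk1 : 1 ≤ k := by omega
  have hmk : (m:ℝ) = (k:ℝ)/2 := by
    have : (k:ℝ) = 2*(m:ℝ) := by exact_mod_cast congrArg (Nat.cast : ℕ → ℝ) hk2m
    linarith
  have hkpos : (0:ℝ) < k := by positivity
  set Gq : ℝ := Real.exp (-(Real.pi*(y-1))) * (1 - Real.exp (-(Real.pi*(y-1))))⁻¹ with hGq
  have hq1 : Real.exp (-(Real.pi*(y-1))) < 1 := by
    rw [Real.exp_lt_one_iff]; nlinarith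
  have hGq0 : 0 ≤ Gq := by
    have h1q : 0 < 1 - Real.exp (-(Real.pi*(y-1))) := by linarith
    have := Real.exp_pos (-(Real.pi*(y-1)))
    positivity
  set ρ : ℝ := Real.pi * 1.0242382 * Real.exp 1 / (6*(y+1)) with hρ
  have hρ0 : 0 ≤ ρ := by
    have := Real.exp_pos 1
    rw [hρ]; positivity
  have hCk0 : 0 ≤ Ck k := by
    rw [Ck]
    have h1 : (0:ℝ) ≤ (2 * Real.pi) ^ k / (Nat.factorial (k - 1) : ℝ) := by positivity
    have h2 : (0:ℝ) ≤ (1.0242382 * (k : ℝ) / 12) ^ ((k : ℝ) / 2) :=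
      Real.rpow_nonneg (by positivity) _
    have h3 := Real.sqrt_nonneg (((k : ℝ) / 12) * Real.log k)
    have h4 := (Real.exp_pos (28.466 : ℝ)).le
    positivity
  -- first series
  obtain ⟨hsum1, hbd1⟩ := master hy 1 zero_le_one k
    (fun n => sigmaR (k-1) (n+1) * Real.exp (-2*Real.pi*((n:ℝ)+1)*y)) (by
      intro n
      have hexp := (Real.exp_pos (-2*Real.pi*((n:ℝ)+1)*y)).le
      rw [abs_of_nonneg (mul_nonneg (sigmaR_nonneg _ _) hexp)]
      rw [one_mul]
      refine mul_le_mul_of_nonneg_right ?_ hexp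
      have := sigmaR_le (k-1) (n+1)
      have he : ((n+1 : ℕ):ℝ)^((k-1)+1) = ((n:ℝ)+1)^k := by
        have : (k-1)+1 = k := by omega
        rw [this]
        push_cast
        ring
      rw [he] at this
      exact this)
  -- second series
  obtain ⟨hsum2, hbd2⟩ := master hy (2 * Ck k) (by positivity) m
    (fun n => b k (n+1) * Real.exp (-2*Real.pi*((n:ℝ)+1)*y)) (by
      intro n
      have hexp := (Real.exp_pos (-2*Real.pi*((n:ℝ)+1)*y)).le
      rw [abs_mul, Real.abs_exp]
      refine mul_le_mul_of_nonneg_right ?_ hexp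
      have hbn := hb k ⟨m, hm⟩ hk12 (n+1) (Nat.le_add_left 1 n)
      have he : ((n+1:ℕ):ℝ) ^ ((k:ℝ)/2) = ((n:ℝ)+1)^m := by
        rw [← hmk]
        rw [Real.rpow_natCast]
        push_cast
        ring
      rw [he] at hbn
      exact hbn)
  -- decomposition
  have hdecomp : Fext b k y - 1 =
      (∑' n : ℕ, b k (n+1) * Real.exp (-2*Real.pi*((n:ℝ)+1)*y)) -
      (2 * (k : ℝ) / ((bernoulli k : ℚ) : ℝ)) *
        (∑' n : ℕ, sigmaR (k-1) (n+1) * Real.exp (-2*Real.pi*((n:ℝ)+1)*y)) := by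
    rw [Fext, EisW]
    ring
  have htri : |Fext b k y - 1| ≤
      |2 * (k : ℝ) / ((bernoulli k : ℚ) : ℝ)| *
        |∑' n : ℕ, sigmaR (k-1) (n+1) * Real.exp (-2*Real.pi*((n:ℝ)+1)*y)| +
      |∑' n : ℕ, b k (n+1) * Real.exp (-2*Real.pi*((n:ℝ)+1)*y)| := by
    rw [hdecomp]
    calc |_ - _| ≤ |∑' n : ℕ, b k (n+1) * Real.exp (-2*Real.pi*((n:ℝ)+1)*y)| +
        |(2 * (k : ℝ) / ((bernoulli k : ℚ) : ℝ)) *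
          (∑' n : ℕ, sigmaR (k-1) (n+1) * Real.exp (-2*Real.pi*((n:ℝ)+1)*y))| :=
        abs_sub _ _
      _ = _ := by rw [abs_mul]; ring
  rw [← hGq] at hbd1 hbd2
  -- positivity facts
  have hfacpos : (0:ℝ) < (Nat.factorial (k-1) : ℝ) := by
    exact_mod_cast (k-1).factorial_pos
  have hkfact : ((k:ℝ)/Real.exp 1)^k ≤ (k:ℝ) * (Nat.factorial (k-1):ℝ) := by
    have h := fact_lb k
    have he : (Nat.factorial k : ℝ) = (k:ℝ) * (Nat.factorial (k-1):ℝ) := by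
      rw [← Nat.cast_mul, Nat.mul_factorial_pred (by omega)]
    linarith
  have hepos := Real.exp_pos 1
  -- Term A
  have hbaseA : (2*Real.pi) * ((k:ℝ)/(Real.pi*(y+1)*Real.exp 1))
      = (2/(y+1)) * ((k:ℝ)/Real.exp 1) := by
    field_simp
  have heqA : (2*Real.pi)^k * ((k:ℝ)/(Real.pi*(y+1)*Real.exp 1))^k
      = (2/(y+1))^k * ((k:ℝ)/Real.exp 1)^k := by
    rw [← mul_pow, hbaseA, mul_pow]
  have h1A : (2*Real.pi)^k * ((k:ℝ)/(Real.pi*(y+1)*Real.exp 1))^k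
      ≤ (k:ℝ)*(2/(y+1))^k * (Nat.factorial (k-1):ℝ) := by
    rw [heqA]
    calc (2/(y+1))^k * ((k:ℝ)/Real.exp 1)^k
        ≤ (2/(y+1))^k * ((k:ℝ) * (Nat.factorial (k-1):ℝ)) :=
          mul_le_mul_of_nonneg_left hkfact (by positivity)
      _ = (k:ℝ)*(2/(y+1))^k * (Nat.factorial (k-1):ℝ) := by ring
  have hA : |2 * (k : ℝ) / ((bernoulli k : ℚ) : ℝ)| *
      |∑' n : ℕ, sigmaR (k-1) (n+1) * Real.exp (-2*Real.pi*((n:ℝ)+1)*y)|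
      ≤ Gq * ((k:ℝ) * (2/(y+1))^k) := by
    have step1 : |2 * (k : ℝ) / ((bernoulli k : ℚ) : ℝ)| *
        |∑' n : ℕ, sigmaR (k-1) (n+1) * Real.exp (-2*Real.pi*((n:ℝ)+1)*y)|
        ≤ ((2*Real.pi)^k / (Nat.factorial (k-1):ℝ)) *
          (1 * ((k:ℝ)/(Real.pi*(y+1)*Real.exp 1))^k * Gq) := by
      apply mul_le_mul (bern_bound ⟨m, hm⟩ hk1) hbd1 (abs_nonneg _) (by positivity)
    refine step1.trans ?_
    calc ((2*Real.pi)^k / (Nat.factorial (k-1):ℝ)) *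
          (1 * ((k:ℝ)/(Real.pi*(y+1)*Real.exp 1))^k * Gq)
        = (Gq / (Nat.factorial (k-1):ℝ)) *
            ((2*Real.pi)^k * ((k:ℝ)/(Real.pi*(y+1)*Real.exp 1))^k) := by ring
      _ ≤ (Gq / (Nat.factorial (k-1):ℝ)) *
            ((k:ℝ)*(2/(y+1))^k * (Nat.factorial (k-1):ℝ)) :=
          mul_le_mul_of_nonneg_left h1A (by positivity)
      _ = Gq * ((k:ℝ) * (2/(y+1))^k) * ((Nat.factorial (k-1):ℝ)/(Nat.factorial (k-1):ℝ)) := by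
          ring
      _ = Gq * ((k:ℝ) * (2/(y+1))^k) := by rw [div_self hfacpos.ne']; ring
  -- Term B
  have hr2k : (Real.sqrt ρ)^k = ρ^m := by
    rw [hk2m, pow_mul, Real.sq_sqrt hρ0]
  have hrp : (1.0242382 * (k:ℝ)/12) ^ ((k:ℝ)/2) = (1.0242382 * (k:ℝ)/12) ^ m := by
    rw [show ((k:ℝ)/2) = ((m:ℕ):ℝ) from hmk.symm, Real.rpow_natCast]
  have hlogk0 : 0 ≤ Real.log k := Real.log_nonneg (by exact_mod_cast hk1)
  have hS : Real.sqrt (((k:ℝ)/12) * Real.log k) ≤ (k:ℝ) := by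
    have hlog : Real.log k ≤ (k:ℝ) := by
      have := Real.log_le_sub_one_of_pos hkpos
      linarith
    have h1 : ((k:ℝ)/12) * Real.log k ≤ (k:ℝ)^2 := by nlinarith
    calc Real.sqrt (((k:ℝ)/12) * Real.log k) ≤ Real.sqrt ((k:ℝ)^2) := Real.sqrt_le_sqrt h1
      _ = (k:ℝ) := Real.sqrt_sq hkpos.le
  have hbaseB : (2*Real.pi)^2 * ((1.0242382*(k:ℝ)/12) * ((m:ℝ)/(Real.pi*(y+1)*Real.exp 1)))
      = ρ * ((k:ℝ)/Real.exp 1)^2 := by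
    rw [hρ, hmk]
    generalize Real.exp 1 = E at hepos ⊢
    field_simp
    ring
  have heqB : (2*Real.pi)^k * ((1.0242382*(k:ℝ)/12)^m * ((m:ℝ)/(Real.pi*(y+1)*Real.exp 1))^m)
      = ρ^m * ((k:ℝ)/Real.exp 1)^k := by
    have h1 : (2*Real.pi)^k = ((2*Real.pi)^2)^m := by rw [hk2m, pow_mul]
    calc (2*Real.pi)^k * ((1.0242382*(k:ℝ)/12)^m * ((m:ℝ)/(Real.pi*(y+1)*Real.exp 1))^m)
        = ((2*Real.pi)^2)^m *
            ((1.0242382*(k:ℝ)/12)^m * ((m:ℝ)/(Real.pi*(y+1)*Real.exp 1))^m) := by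
          rw [h1]
      _ = ((2*Real.pi)^2 * ((1.0242382*(k:ℝ)/12) * ((m:ℝ)/(Real.pi*(y+1)*Real.exp 1))))^m := by
          rw [← mul_pow (1.0242382*(k:ℝ)/12) ((m:ℝ)/(Real.pi*(y+1)*Real.exp 1)) m,
            ← mul_pow]
      _ = (ρ * ((k:ℝ)/Real.exp 1)^2)^m := by rw [hbaseB]
      _ = ρ^m * (((k:ℝ)/Real.exp 1)^2)^m := mul_pow _ _ _
      _ = ρ^m * ((k:ℝ)/Real.exp 1)^k := by rw [← pow_mul, ← hk2m]
  have hcore : (2*Real.pi)^k *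
      ((1.0242382*(k:ℝ)/12)^m * ((m:ℝ)/(Real.pi*(y+1)*Real.exp 1))^m)
      ≤ (k:ℝ) * ρ^m * (Nat.factorial (k-1):ℝ) := by
    rw [heqB]
    calc ρ^m * ((k:ℝ)/Real.exp 1)^k ≤ ρ^m * ((k:ℝ) * (Nat.factorial (k-1):ℝ)) :=
        mul_le_mul_of_nonneg_left hkfact (pow_nonneg hρ0 m)
      _ = (k:ℝ) * ρ^m * (Nat.factorial (k-1):ℝ) := by ring
  have hB : |∑' n : ℕ, b k (n+1) * Real.exp (-2*Real.pi*((n:ℝ)+1)*y)|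
      ≤ Gq * (2 * Real.exp 28.466 * ((k:ℝ)^2 * (Real.sqrt ρ)^k)) := by
    refine hbd2.trans ?_
    rw [Ck, hrp, hr2k]
    have hEnn := (Real.exp_pos (28.466:ℝ)).le
    have hSnn := Real.sqrt_nonneg (((k:ℝ)/12) * Real.log k)
    calc 2 * ((2 * Real.pi) ^ k / (Nat.factorial (k - 1) : ℝ) * Real.exp 28.466 *
          Real.sqrt (((k : ℝ) / 12) * Real.log k) * (1.0242382 * (k : ℝ) / 12) ^ m) *
          ((m:ℝ)/(Real.pi*(y+1)*Real.exp 1))^m * Gq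
        = (2 * Real.exp 28.466 * Gq / (Nat.factorial (k-1):ℝ)) *
            (Real.sqrt (((k : ℝ) / 12) * Real.log k) *
              ((2*Real.pi)^k *
                ((1.0242382*(k:ℝ)/12)^m * ((m:ℝ)/(Real.pi*(y+1)*Real.exp 1))^m))) := by
          ring
      _ ≤ (2 * Real.exp 28.466 * Gq / (Nat.factorial (k-1):ℝ)) *
            ((k:ℝ) * ((k:ℝ) * ρ^m * (Nat.factorial (k-1):ℝ))) := by
          refine mul_le_mul_of_nonneg_left ?_ (by positivity)
          exact mul_le_mul hS hcore (by positivity) hkpos.le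
      _ = Gq * (2 * Real.exp 28.466 * ((k:ℝ)^2 * ρ^m)) *
            ((Nat.factorial (k-1):ℝ)/(Nat.factorial (k-1):ℝ)) := by ring
      _ = Gq * (2 * Real.exp 28.466 * ((k:ℝ)^2 * ρ^m)) := by
          rw [div_self hfacpos.ne']; ring
  refine htri.trans ?_
  rw [mul_add]
  exact add_le_add hA hB

/-- Fix a real `y > 1`.  If for each even `k ≥ 12` the cusp-form coefficients `b_k : ℕ → ℝ`
satisfy `|b_k(n)| ≤ 2 C_k n^{k/2}` for all `n ≥ 1`, and
`F_k(iy) = E_k(iy) + ∑_{n≥1} b_k(n) e^{−2πny}`, then `F_k(iy) → 1` as `k → ∞` over even `k`;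
in particular `(1/k) log|F_k(iy)| → 0`, so the family `F_k` is sparse. -/
theorem extremal_forms_sparse (y : ℝ) (hy : 1 < y) (b : ℕ → ℕ → ℝ)
    (hb : ∀ k : ℕ, Even k → 12 ≤ k → ∀ n : ℕ, 1 ≤ n →
      |b k n| ≤ 2 * Ck k * (n : ℝ) ^ ((k : ℝ) / 2)) :
    Tendsto (fun k : ℕ => Fext b k y)
      (atTop ⊓ Filter.principal {k : ℕ | Even k}) (nhds 1) ∧
    Tendsto (fun k : ℕ => (1 / (k : ℝ)) * Real.log |Fext b k y|)
      (atTop ⊓ Filter.principal {k : ℕ | Even k}) (nhds 0) := by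
  have hpi := Real.pi_pos
  set F := atTop ⊓ Filter.principal {k : ℕ | Even k} with hF
  set Gq : ℝ := Real.exp (-(Real.pi*(y-1))) * (1 - Real.exp (-(Real.pi*(y-1))))⁻¹ with hGq
  set r1 : ℝ := 2/(y+1) with hr1
  set ρ : ℝ := Real.pi * 1.0242382 * Real.exp 1 / (6*(y+1)) with hρ
  set r2 : ℝ := Real.sqrt ρ with hr2
  have hr1a : 0 < r1 := by rw [hr1]; positivity
  have hr1b : r1 < 1 := by
    rw [hr1, div_lt_one (by linarith)]
    linarith
  have hρ0 : 0 ≤ ρ := by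
    have := Real.exp_pos 1
    rw [hρ]; positivity
  have hρ1 : ρ < 1 := by
    have h315 := Real.pi_lt_d2
    have he9 := Real.exp_one_lt_d9
    have he0 := Real.exp_pos 1
    rw [hρ, div_lt_one (by linarith)]
    nlinarith
  have hr2a : 0 ≤ r2 := Real.sqrt_nonneg _
  have hr2b : r2 < 1 := by
    rw [hr2]
    have := Real.sqrt_lt_sqrt hρ0 hρ1
    rwa [Real.sqrt_one] at this
  set W : ℕ → ℝ := fun k => Gq * ((k:ℝ) * r1^k +
      2 * Real.exp 28.466 * ((k:ℝ)^2 * r2^k)) with hW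
  -- limit of W
  have t1 : Tendsto (fun k : ℕ => (k:ℝ) * r1^k) atTop (nhds 0) := by
    have hs := (summable_pow_mul_geometric_of_norm_lt_one 1
      (r := r1) (by rw [Real.norm_eq_abs, abs_of_pos hr1a]; exact hr1b)).tendsto_atTop_zero
    simpa using hs
  have t2 : Tendsto (fun k : ℕ => (k:ℝ)^2 * r2^k) atTop (nhds 0) := by
    have hs := (summable_pow_mul_geometric_of_norm_lt_one 2
      (r := r2) (by rw [Real.norm_eq_abs, abs_of_nonneg hr2a]; exact hr2b)).tendsto_atTop_zero
    simpa using hs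
  have hWto : Tendsto W atTop (nhds 0) := by
    have := (t1.add (t2.const_mul (2 * Real.exp 28.466))).const_mul Gq
    simpa [hW, mul_comm, mul_assoc, mul_left_comm] using this
  -- squeeze
  have hev : ∀ᶠ k in F, ‖Fext b k y - 1‖ ≤ W k := by
    rw [hF, eventually_inf_principal]
    filter_upwards [eventually_ge_atTop 12] with k hk12 hkev
    have := main_bound hy b hb hkev hk12
    simpa [Real.norm_eq_abs, hW, hGq, hr1, hr2, hρ] using this
  have hdiff : Tendsto (fun k : ℕ => Fext b k y - 1) F (nhds 0) :=
    squeeze_zero_norm' hev (hWto.mono_left inf_le_left)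
  have h1 : Tendsto (fun k : ℕ => Fext b k y) F (nhds 1) := by
    have := hdiff.add_const 1
    simpa using this
  refine ⟨h1, ?_⟩
  have habs1 : Tendsto (fun k : ℕ => |Fext b k y|) F (nhds 1) := by
    have := (continuous_abs.tendsto (1:ℝ)).comp h1
    simpa [Function.comp_def] using this
  have hlog : Tendsto (fun k : ℕ => Real.log |Fext b k y|) F (nhds 0) := by
    have := (Real.continuousAt_log one_ne_zero).tendsto.comp habs1
    simpa [Function.comp_def, Real.log_one] using this
  have hinv : Tendsto (fun k : ℕ => 1/(k:ℝ)) F (nhds 0) :=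
    tendsto_one_div_atTop_nhds_zero_nat.mono_left inf_le_left
  have := hinv.mul hlog
  simpa using this
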